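/- Let X and Y be nondegenerate regular A-correspondences, B a C*-algebra, and let (π,σ) and (π,ω) be representations of X and Y in B with the same *-homomorphism π on A. If both (π,σ) and (π,ω) are Cuntz–Pimsner covariant, then the product representation (π, σω) of X ⊗_A Y in B, defined on elementary tensors by (σω)(x ⊗ y) = σ(x)ω(y), is Cuntz–Pimsner covariant. Consequently the full subcategory 𝒢^B_c of covariantly represented A-correspondences is a monoidal subcategory of 𝒢^B. -/

import Mathlib

/- ############################################################
   Common framework: C*-correspondences, interior tensor products
   (characterized relationally), representations, Cuntz–Pimsner algebras,
   product systems over ℕ^k, generating systems, and the ℰ / ℛθ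
   constructions of the paper (characterized relationally).
   ############################################################ -/

noncomputable section

open Filter Topology

universe u

/-- A C*-correspondence over a (not necessarily unital) C*-algebra `A`:
a right Hilbert `A`-module `X` together with a left action of `A` by
adjointable (bounded) operators.  The rank-one operators `θ_{x,y}` are
bundled as data together with their defining property. -/
structure Corr (A : Type u) [NonUnitalCStarAlgebra A] : Type (u + 1) where
  X : Type u
  [nacg : NormedAddCommGroup X]
  [nsp : NormedSpace ℂ X]
  [cmpl : CompleteSpace X]
  /-- right action of `A` -/
  ract : X → A → X
  /-- `A`-valued inner product -/
  inner : X → X → A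
  /-- left action `φ : A → L(X)` by adjointable operators -/
  lactL : A → X →L[ℂ] X
  /-- the rank-one ("compact") operators `θ_{x,y} z = x ⬝ ⟨y, z⟩` -/
  rankOne : X → X → X →L[ℂ] X
  ract_add_left : ∀ x y a, ract (x + y) a = ract x a + ract y a
  ract_add_right : ∀ x a b, ract x (a + b) = ract x a + ract x b
  ract_mul : ∀ x a b, ract x (a * b) = ract (ract x a) b
  ract_smul : ∀ (c : ℂ) x a, ract (c • x) a = c • ract x a
  ract_smul' : ∀ (c : ℂ) x a, ract x (c • a) = c • ract x a
  inner_add_right : ∀ x y z, inner x (y + z) = inner x y + inner x z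
  inner_smul_right : ∀ (c : ℂ) x y, inner x (c • y) = c • inner x y
  inner_star : ∀ x y, star (inner x y) = inner y x
  inner_ract_right : ∀ x y a, inner x (ract y a) = inner x y * a
  norm_eq : ∀ x, ‖x‖ ^ 2 = ‖inner x x‖
  lact_add : ∀ a b, lactL (a + b) = lactL a + lactL b
  lact_mul : ∀ a b, lactL (a * b) = (lactL a).comp (lactL b)
  lact_smul : ∀ (c : ℂ) a, lactL (c • a) = c • lactL a
  lact_adjoint : ∀ a x y, inner (lactL a x) y = inner x (lactL (star a) y)
  rankOne_apply : ∀ x y z, rankOne x y z = ract x (inner y z)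

attribute [instance] Corr.nacg Corr.nsp Corr.cmpl

variable {A : Type u} [NonUnitalCStarAlgebra A]

/-- Nondegeneracy: `A·X` is (topologically) all of `X`. -/
def Corr.Nondeg (W : Corr A) : Prop :=
  closure (Submodule.span ℂ {y : W.X | ∃ a x, y = W.lactL a x} : Set W.X) = Set.univ

/-- Regularity: the left action is injective and takes values in the
compact operators (the closed span of the rank-one operators). -/
def Corr.Regular (W : Corr A) : Prop :=
  (∀ a, W.lactL a = 0 → a = 0) ∧
    ∀ a, W.lactL a ∈
      closure (Submodule.span ℂ {T : W.X →L[ℂ] W.X | ∃ x y, T = W.rankOne x y} :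
        Set (W.X →L[ℂ] W.X))

/-- standing hypotheses of the paper: nondegenerate and regular -/
def Corr.Reg (W : Corr A) : Prop := W.Nondeg ∧ W.Regular

/-- a bare function which is a continuous `ℂ`-linear map -/
structure IsCLMap {E F : Type u} [NormedAddCommGroup E] [NormedSpace ℂ E]
    [NormedAddCommGroup F] [NormedSpace ℂ F] (f : E → F) : Prop where
  map_add : ∀ x y, f (x + y) = f x + f y
  map_smul : ∀ (c : ℂ) x, f (c • x) = c • f x
  cont : Continuous f

/-- a map of correspondences over the same algebra which is an isomorphism -/
structure IsCorrIsoFun (W Z : Corr A) (f : W.X → Z.X) : Prop where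
  bijective : Function.Bijective f
  map_add : ∀ x y, f (x + y) = f x + f y
  map_smul : ∀ (c : ℂ) x, f (c • x) = c • f x
  map_inner : ∀ x y, Z.inner (f x) (f y) = W.inner x y
  map_ract : ∀ x a, f (W.ract x a) = Z.ract (f x) a
  map_lact : ∀ a x, f (W.lactL a x) = Z.lactL a (f x)

/-- an isomorphism of correspondences over the same algebra (bundled) -/
structure CorrIso (W Z : Corr A) : Type u where
  toFun : W.X → Z.X
  invFun : Z.X → W.X
  left_inv : ∀ x, invFun (toFun x) = x
  right_inv : ∀ y, toFun (invFun y) = y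
  map_add : ∀ x y, toFun (x + y) = toFun x + toFun y
  map_smul : ∀ (c : ℂ) x, toFun (c • x) = c • toFun x
  map_inner : ∀ x y, Z.inner (toFun x) (toFun y) = W.inner x y
  map_ract : ∀ x a, toFun (W.ract x a) = Z.ract (toFun x) a
  map_lact : ∀ a x, toFun (W.lactL a x) = Z.lactL a (toFun x)

/-- an isomorphism of correspondences lying over an isomorphism `Φ` of the
coefficient algebras -/
structure CorrIsoOver {B : Type u} [NonUnitalCStarAlgebra B]
    (Φ : A → B) (W : Corr A) (Z : Corr B) : Type u where
  toFun : W.X → Z.X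
  bijective : Function.Bijective toFun
  map_add : ∀ x y, toFun (x + y) = toFun x + toFun y
  map_smul : ∀ (c : ℂ) x, toFun (c • x) = c • toFun x
  map_inner : ∀ x y, Z.inner (toFun x) (toFun y) = Φ (W.inner x y)
  map_ract : ∀ x a, toFun (W.ract x a) = Z.ract (toFun x) (Φ a)
  map_lact : ∀ a x, toFun (W.lactL a x) = Z.lactL (Φ a) (toFun x)

/-- `T`, together with the bilinear map `m`, is a realization of the
balanced (interior) tensor product `W ⊗_A V` of correspondences over `A`. -/
structure IsTensor (W V T : Corr A) (m : W.X → V.X → T.X) : Prop where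
  add_left : ∀ x x' y, m (x + x') y = m x y + m x' y
  add_right : ∀ x y y', m x (y + y') = m x y + m x y'
  smul_left : ∀ (c : ℂ) x y, m (c • x) y = c • m x y
  smul_right : ∀ (c : ℂ) x y, m x (c • y) = c • m x y
  balanced : ∀ x a y, m (W.ract x a) y = m x (V.lactL a y)
  inner : ∀ x y x' y',
    T.inner (m x y) (m x' y') = V.inner y (V.lactL (W.inner x x') y')
  ract : ∀ x y a, T.ract (m x y) a = m x (V.ract y a)
  lact : ∀ a x y, T.lactL a (m x y) = m (W.lactL a x) y
  dense : closure (Submodule.span ℂ {z : T.X | ∃ x y, z = m x y} : Set T.X) = Set.univ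

variable {B : Type u} [NonUnitalCStarAlgebra B]

/-- `π : A → B` is a *-homomorphism (stated elementwise) -/
structure IsStarHom (π : A → B) : Prop where
  map_add : ∀ a b, π (a + b) = π a + π b
  map_mul : ∀ a b, π (a * b) = π a * π b
  map_star : ∀ a, π (star a) = star (π a)
  map_smul : ∀ (c : ℂ) a, π (c • a) = c • π a

/-- `(π, t)` is a representation (Toeplitz representation) of the
correspondence `W` in the C*-algebra `B`. -/
structure IsRep (W : Corr A) (π : A → B) (t : W.X → B) : Prop where
  hom : IsStarHom π
  t_add : ∀ x y, t (x + y) = t x + t y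
  t_smul : ∀ (c : ℂ) x, t (c • x) = c • t x
  lact : ∀ a x, t (W.lactL a x) = π a * t x
  ract : ∀ x a, t (W.ract x a) = t x * π a
  inner : ∀ x y, star (t x) * t y = π (W.inner x y)

/-- Cuntz–Pimsner covariance of a representation of a *regular*
correspondence: whenever `φ(a)` is approximated in norm by finite sums of
rank-one operators `θ_{x,y}`, `π(a)` is approximated by the corresponding
sums `t(x) t(y)*`.  (For regular correspondences this is equivalent to
`π = t⁽¹⁾ ∘ φ`.) -/
def CPCov (W : Corr A) (π : A → B) (t : W.X → B) : Prop :=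
  ∀ (a : A) (N : ℕ → ℕ) (x y : ∀ n, Fin (N n) → W.X),
    Tendsto (fun n => ∑ r, W.rankOne (x n r) (y n r)) atTop (𝓝 (W.lactL a)) →
    Tendsto (fun n => ∑ r, t (x n r) * star (t (y n r))) atTop (𝓝 (π a))

/-- The Cuntz–Pimsner algebra of a correspondence `W`: a C*-algebra `O`
together with a universal covariant representation `(π, t)`:  `(π,t)` is
covariant, `π` is injective, `O` is generated by the images of `π` and `t`,
and every covariant representation factors uniquely through `O`. -/
structure CPAlg (W : Corr A) : Type (u + 1) where
  O : Type u
  [alg : NonUnitalCStarAlgebra O]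
  π : A → O
  t : W.X → O
  isRep : IsRep W π t
  covariant : CPCov W π t
  inj : Function.Injective π
  gen : ∀ S : Set O, IsClosed S →
    (∀ a, π a ∈ S) → (∀ x, t x ∈ S) →
    (∀ p q, p ∈ S → q ∈ S → p + q ∈ S) →
    (∀ p q, p ∈ S → q ∈ S → p * q ∈ S) →
    (∀ (c : ℂ) p, p ∈ S → c • p ∈ S) →
    (∀ p, p ∈ S → star p ∈ S) → ∀ z, z ∈ S
  universal : ∀ (C : Type u) [NonUnitalCStarAlgebra C],
    ∀ (π' : A → C) (t' : W.X → C), IsRep W π' t' → CPCov W π' t' →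
      ∃! h : O →⋆ₙₐ[ℂ] C, (∀ a, h (π a) = π' a) ∧ ∀ x, h (t x) = t' x

attribute [instance] CPAlg.alg

/- ##################  product systems over ℕ^k  ################## -/

/-- the `i`-th standard generator of `ℕ^k` -/
def egen {k : ℕ} (i : Fin k) : Fin k → ℕ := Pi.single i 1

/-- A product system over `ℕ^k` of (nondegenerate regular) correspondences
over `A`:  fibers `fib s`, an associative multiplication implementing
isomorphisms `fib s ⊗_A fib t ≅ fib (s+t)`, and `fib 0 = A` (witnessed by
the unit map). -/
structure PSys (A : Type u) [NonUnitalCStarAlgebra A] (k : ℕ) : Type (u + 1) where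
  fib : (Fin k → ℕ) → Corr A
  reg : ∀ s, (fib s).Reg
  mul : ∀ s t, (fib s).X → (fib t).X → (fib (s + t)).X
  isTensor : ∀ s t, IsTensor (fib s) (fib t) (fib (s + t)) (mul s t)
  assoc : ∀ s t u x y z,
    HEq (mul (s + t) u (mul s t x y) z) (mul s (t + u) x (mul t u y z))
  unit : A → (fib 0).X
  unit_bij : Function.Bijective unit
  unit_add : ∀ a b, unit (a + b) = unit a + unit b
  unit_smul : ∀ (c : ℂ) a, unit (c • a) = c • unit a
  unit_inner : ∀ a b, (fib 0).inner (unit a) (unit b) = star a * b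
  unit_lact : ∀ a b, (fib 0).lactL a (unit b) = unit (a * b)
  unit_ract : ∀ a b, (fib 0).ract (unit a) b = unit (a * b)
  unit_mul_left : ∀ s a x, HEq (mul 0 s (unit a) x) ((fib s).lactL a x)
  unit_mul_right : ∀ s x a, HEq (mul s 0 x (unit a)) ((fib s).ract x a)

/-- a representation of a product system in a C*-algebra `B` -/
structure PSRep {k : ℕ} (Xs : PSys A k) (B : Type u) [NonUnitalCStarAlgebra B] :
    Type u where
  π : A → B
  ψ : ∀ s, (Xs.fib s).X → B
  isRep : ∀ s, IsRep (Xs.fib s) π (ψ s)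
  ψ_zero : ∀ a, ψ 0 (Xs.unit a) = π a
  mul : ∀ s t x y, ψ s x * ψ t y = ψ (s + t) (Xs.mul s t x y)

/-- Cuntz–Pimsner covariance of a representation of a product system -/
def PSCPCov {k : ℕ} {Xs : PSys A k} {B : Type u} [NonUnitalCStarAlgebra B]
    (r : PSRep Xs B) : Prop :=
  ∀ s, CPCov (Xs.fib s) r.π (r.ψ s)

/-- The Cuntz–Pimsner algebra `𝒪(X)` of a product system. -/
structure PSCPAlg {k : ℕ} (Xs : PSys A k) : Type (u + 1) where
  O : Type u
  [alg : NonUnitalCStarAlgebra O]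
  rep : PSRep Xs O
  covariant : PSCPCov rep
  inj : Function.Injective rep.π
  gen : ∀ S : Set O, IsClosed S →
    (∀ a, rep.π a ∈ S) → (∀ s x, rep.ψ s x ∈ S) →
    (∀ p q, p ∈ S → q ∈ S → p + q ∈ S) →
    (∀ p q, p ∈ S → q ∈ S → p * q ∈ S) →
    (∀ (c : ℂ) p, p ∈ S → c • p ∈ S) →
    (∀ p, p ∈ S → star p ∈ S) → ∀ z, z ∈ S
  universal : ∀ (C : Type u) [NonUnitalCStarAlgebra C],
    ∀ r : PSRep Xs C, PSCPCov r →
      ∃! h : O →⋆ₙₐ[ℂ] C,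
        (∀ a, h (rep.π a) = r.π a) ∧ ∀ s x, h (rep.ψ s x) = r.ψ s x

attribute [instance] PSCPAlg.alg

/- ##################  generating systems  ################## -/

/-- a realization of a triple tensor product `W1 ⊗ W2 ⊗ W3` carrying both
a left pairing `(W1 ⊗ W2) ⊗ W3` and a right pairing `W1 ⊗ (W2 ⊗ W3)` -/
structure Trip (W1 W2 W3 : Corr A) (T12 : Corr A) (m12 : W1.X → W2.X → T12.X)
    (T23 : Corr A) (m23 : W2.X → W3.X → T23.X) (P : Corr A) : Type u where
  lp : T12.X → W3.X → P.X
  rp : W1.X → T23.X → P.X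
  lt : IsTensor T12 W3 P lp
  rt : IsTensor W1 T23 P rp
  compat : ∀ x y z, lp (m12 x y) z = rp x (m23 y z)

/-- the hexagonal relation for a triple of flip isomorphisms
`θij, θil, θjl`, stated relative to arbitrary realizations of the six
triple tensor products. -/
def HexProp (Yi Yj Yl : Corr A)
    (Tij Tji Til Tli Tjl Tlj : Corr A)
    (mij : Yi.X → Yj.X → Tij.X) (mji : Yj.X → Yi.X → Tji.X)
    (mil : Yi.X → Yl.X → Til.X) (mli : Yl.X → Yi.X → Tli.X)
    (mjl : Yj.X → Yl.X → Tjl.X) (mlj : Yl.X → Yj.X → Tlj.X)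
    (θij : Tij.X → Tji.X) (θil : Til.X → Tli.X) (θjl : Tjl.X → Tlj.X) : Prop :=
  ∀ (P1 P2 P3 P4 P5 P6 : Corr A)
    (R1 : Trip Yi Yj Yl Tij mij Tjl mjl P1)
    (R2 : Trip Yj Yi Yl Tji mji Til mil P2)
    (R3 : Trip Yj Yl Yi Tjl mjl Tli mli P3)
    (R4 : Trip Yl Yj Yi Tlj mlj Tji mji P4)
    (R5 : Trip Yi Yl Yj Til mil Tlj mlj P5)
    (R6 : Trip Yl Yi Yj Tli mli Tij mij P6)
    (F1 : P1.X → P2.X) (F2 : P2.X → P3.X) (F3 : P3.X → P4.X)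
    (F4 : P1.X → P5.X) (F5 : P5.X → P6.X) (F6 : P6.X → P4.X),
    IsCLMap F1 → IsCLMap F2 → IsCLMap F3 →
    IsCLMap F4 → IsCLMap F5 → IsCLMap F6 →
    (∀ u z, F1 (R1.lp u z) = R2.lp (θij u) z) →
    (∀ y v, F2 (R2.rp y v) = R3.rp y (θil v)) →
    (∀ u z, F3 (R3.lp u z) = R4.lp (θjl u) z) →
    (∀ x v, F4 (R1.rp x v) = R5.rp x (θjl v)) →
    (∀ u z, F5 (R5.lp u z) = R6.lp (θil u) z) →
    (∀ x v, F6 (R6.rp x v) = R4.rp x (θij v)) →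
    ∀ w, F3 (F2 (F1 w)) = F6 (F5 (F4 w))

/-- A generating system `(Y, θ)` of `k` correspondences over `A`:
correspondences `Y i`, chosen realizations `T i j` of the tensor products
`Y i ⊗_A Y j`, and flip isomorphisms `θ i j : Y i ⊗ Y j → Y j ⊗ Y i` with
`θ i i = id`, `θ j i = (θ i j)⁻¹`, satisfying the hexagonal relations. -/
structure GenSys (A : Type u) [NonUnitalCStarAlgebra A] (k : ℕ) : Type (u + 1) where
  Y : Fin k → Corr A
  reg : ∀ i, (Y i).Reg
  T : Fin k → Fin k → Corr A
  tmul : ∀ i j, (Y i).X → (Y j).X → (T i j).X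
  isTensor : ∀ i j, IsTensor (Y i) (Y j) (T i j) (tmul i j)
  θ : ∀ i j, CorrIso (T i j) (T j i)
  θ_diag : ∀ i x y, (θ i i).toFun (tmul i i x y) = tmul i i x y
  θ_symm : ∀ i j z, (θ j i).toFun ((θ i j).toFun z) = z
  hex : ∀ i j l, HexProp (Y i) (Y j) (Y l) (T i j) (T j i) (T i l) (T l i)
    (T j l) (T l j) (tmul i j) (tmul j i) (tmul i l) (tmul l i) (tmul j l)
    (tmul l j) ((θ i j).toFun) ((θ i l).toFun) ((θ j l).toFun)

/-- the generating system obtained by keeping only `Y 1, …, Y m` -/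
def GenSys.restrict {k : ℕ} (G : GenSys A k) (m : ℕ) (h : m ≤ k) : GenSys A m where
  Y i := G.Y (Fin.castLE h i)
  reg i := G.reg _
  T i j := G.T (Fin.castLE h i) (Fin.castLE h j)
  tmul i j := G.tmul _ _
  isTensor i j := G.isTensor _ _
  θ i j := G.θ _ _
  θ_diag i := G.θ_diag _
  θ_symm i j := G.θ_symm _ _
  hex i j l := G.hex _ _ _

/-- `X` is *the* product system (over `ℕ^k`) generated by the generating
system `G` (Fowler–Sims); witnessed by compatible isomorphisms on the
generating fibers. -/
structure Generates {k : ℕ} (G : GenSys A k) (Xs : PSys A k) : Type u where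
  ι : ∀ i, CorrIso (G.Y i) (Xs.fib (egen i))
  κ : ∀ i j, CorrIso (G.T i j) (Xs.fib (egen i + egen j))
  κ_mul : ∀ i j x y,
    (κ i j).toFun (G.tmul i j x y) =
      Xs.mul (egen i) (egen j) ((ι i).toFun x) ((ι j).toFun y)
  θ_compat : ∀ i j z,
    HEq ((κ j i).toFun ((G.θ i j).toFun z)) ((κ i j).toFun z)

/- ############  mixed tensor products `W ⊗_A O` and `W ⊗_A V`  ############ -/

/-- `Z` (a correspondence over the C*-algebra `O`), with map `m`, is a
realization of the right Hilbert `O`-module `W ⊗_A O`, where `O` is an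
`A`-algebra via `πA`.  (No condition on the left action of `O` on `Z`.) -/
structure MixedMod (W : Corr A) (O : Type u) [NonUnitalCStarAlgebra O]
    (πA : A → O) (Z : Corr O) (m : W.X → O → Z.X) : Prop where
  add_left : ∀ x x' S, m (x + x') S = m x S + m x' S
  add_right : ∀ x S S', m x (S + S') = m x S + m x S'
  smul_left : ∀ (c : ℂ) x S, m (c • x) S = c • m x S
  smul_right : ∀ (c : ℂ) x S, m x (c • S) = c • m x S
  balanced : ∀ x a S, m (W.ract x a) S = m x (πA a * S)
  ract : ∀ x S T, Z.ract (m x S) T = m x (S * T)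
  inner : ∀ x S y T, Z.inner (m x S) (m y T) = star S * (πA (W.inner x y) * T)
  dense : closure (Submodule.span ℂ {z : Z.X | ∃ x S, z = m x S} : Set Z.X) = Set.univ

/-- `P`, with pairing `p`, is a realization of the balanced tensor product
`W ⊗_A V` where `W` is a correspondence over `A` and `V` a correspondence
over the `A`-algebra `O` (via `πA`); the left `A`-action is `πA`-compatible. -/
structure MixedPair (W : Corr A) {O : Type u} [NonUnitalCStarAlgebra O]
    (πA : A → O) (V P : Corr O) (p : W.X → V.X → P.X) : Prop where
  add_left : ∀ x x' v, p (x + x') v = p x v + p x' v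
  add_right : ∀ x v v', p x (v + v') = p x v + p x v'
  smul_left : ∀ (c : ℂ) x v, p (c • x) v = c • p x v
  smul_right : ∀ (c : ℂ) x v, p x (c • v) = c • p x v
  balanced : ∀ x a v, p (W.ract x a) v = p x (V.lactL (πA a) v)
  inner : ∀ x v x' v',
    P.inner (p x v) (p x' v') = V.inner v (V.lactL (πA (W.inner x x')) v')
  ract : ∀ x v S, P.ract (p x v) S = p x (V.ract v S)
  lact_pi : ∀ a x v, P.lactL (πA a) (p x v) = p (W.lactL a x) v
  dense : closure (Submodule.span ℂ {z : P.X | ∃ x v, z = p x v} : Set P.X) = Set.univ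

/- ############  the correspondence `ℰYᵢ = Yᵢ ⊗_A 𝒪(Y₁)`  ############ -/

/-- `Z = Yi ⊗_A 𝒪(Y1)` with the left `𝒪(Y1)`-action determined by the flip
`θ : Y1 ⊗ Yi → Yi ⊗ Y1` (`T` and `T'` are realizations of these tensor
products):  `π(a)` acts by `φ(a) ⊗ 1`, and `t(x)·(y ⊗ S) = (1 ⊗ V)(θ ⊗ 1)
(x ⊗ y ⊗ S)`. -/
structure ECorrData (Y1 Yi : Corr A)
    (T : Corr A) (mT : Y1.X → Yi.X → T.X)
    (T' : Corr A) (mT' : Yi.X → Y1.X → T'.X)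
    (θ : T.X → T'.X)
    (C : CPAlg Y1) (Z : Corr C.O) (m : Yi.X → C.O → Z.X) : Prop where
  mod : MixedMod Yi C.O C.π Z m
  lact_pi : ∀ a y S, Z.lactL (C.π a) (m y S) = m (Yi.lactL a y) S
  lact_t : ∃ μ : T'.X → C.O → Z.X,
    (∀ S, IsCLMap fun u => μ u S) ∧
    (∀ y u S, μ (mT' y u) S = m y (C.t u * S)) ∧
    ∀ x y S, Z.lactL (C.t x) (m y S) = μ (θ (mT x y)) S

/-- `Z = Yi ⊗_A 𝒪(Y p)` for a generating system `G`, with left action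
determined by `θ p i` -/
def ECorr {k : ℕ} (G : GenSys A k) (p i : Fin k) (C : CPAlg (G.Y p))
    (Z : Corr C.O) (m : (G.Y i).X → C.O → Z.X) : Prop :=
  ECorrData (G.Y p) (G.Y i) (G.T p i) (G.tmul p i) (G.T i p) (G.tmul i p)
    ((G.θ p i).toFun) C Z m

/-- `Z = Y j ⊗_A 𝒪(Y 1 ∗ ⋯ ∗ Y m)` with the left action of the
Cuntz–Pimsner algebra of the product system determined on the generators
`σ i = ψ_{e i}` via the flips `θ i j` and the absorption maps. -/
structure EPCorr {k : ℕ} (G : GenSys A k) {m : ℕ} (hm : m ≤ k)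
    (Xs : PSys A m) (gen : Generates (G.restrict m hm) Xs) (C : PSCPAlg Xs)
    (j : Fin k) (Z : Corr C.O) (mm : (G.Y j).X → C.O → Z.X) : Prop where
  mod : MixedMod (G.Y j) C.O C.rep.π Z mm
  lact_pi : ∀ a y S, Z.lactL (C.rep.π a) (mm y S) = mm ((G.Y j).lactL a y) S
  lact_t : ∀ i : Fin m,
    ∃ μ : (G.T j (Fin.castLE hm i)).X → C.O → Z.X,
      (∀ S, IsCLMap fun u => μ u S) ∧
      (∀ y u S, μ (G.tmul j (Fin.castLE hm i) y u) S =
        mm y (C.rep.ψ (egen i) ((gen.ι i).toFun u) * S)) ∧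
      ∀ x y S, Z.lactL (C.rep.ψ (egen i) ((gen.ι i).toFun x)) (mm y S) =
        μ ((G.θ (Fin.castLE hm i) j).toFun (G.tmul (Fin.castLE hm i) j x y)) S

/- ############  the isomorphism `ℛθ = ν⁻¹ (θ ⊗ 1) ν`  ############ -/

/-- Witness data expressing that `R : Zi ⊗_O Zj → Zj ⊗_O Zi` is the map
`ℛθ_{ij} = ν_{ji}⁻¹ (θ_{ij} ⊗ 1_O) ν_{ij}` of the paper, where
`Zi = Yi ⊗_A O`, `O = 𝒪(Y1)`, and `ν_{ij} : (Yi ⊗ O) ⊗_O (Yj ⊗ O) ≅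
Yi ⊗ Yj ⊗ O` is the canonical absorption isomorphism. -/
structure RTheta (O : Type u) [NonUnitalCStarAlgebra O] (πA : A → O)
    (Yi Yj : Corr A) (Tij Tji : Corr A)
    (mij : Yi.X → Yj.X → Tij.X) (mji : Yj.X → Yi.X → Tji.X)
    (θij : Tij.X → Tji.X)
    (Zi Zj : Corr O) (mmi : Yi.X → O → Zi.X) (mmj : Yj.X → O → Zj.X)
    (TZ TZr : Corr O) (mZ : Zi.X → Zj.X → TZ.X) (mZr : Zj.X → Zi.X → TZr.X)
    (R : TZ.X → TZr.X) : Type (u + 1) where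
  Pl : Corr O
  Pr : Corr O
  pij : Yi.X → Zj.X → Pl.X
  pji : Yj.X → Zi.X → Pr.X
  hp : MixedPair Yi πA Zj Pl pij
  hpr : MixedPair Yj πA Zi Pr pji
  q : Tij.X → O → Pl.X
  qr : Tji.X → O → Pr.X
  hq : MixedMod Tij O πA Pl q
  hqr : MixedMod Tji O πA Pr qr
  q_compat : ∀ x y S, q (mij x y) S = pij x (mmj y S)
  q_compatr : ∀ y x S, qr (mji y x) S = pji y (mmi x S)
  ν : TZ.X → Pl.X
  νr : TZr.X → Pr.X
  hν : IsCLMap ν ∧ Function.Bijective ν ∧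
    ∀ x S ζ, ν (mZ (mmi x S) ζ) = pij x (Zj.lactL S ζ)
  hνr : IsCLMap νr ∧ Function.Bijective νr ∧
    ∀ y S ζ, νr (mZr (mmj y S) ζ) = pji y (Zi.lactL S ζ)
  Θ : Pl.X → Pr.X
  hΘ : IsCLMap Θ ∧ ∀ u S, Θ (q u S) = qr (θij u) S
  hR : ∀ z, νr (R z) = Θ (ν z)

/- ############  auxiliary lemmas for Statement 9  ############ -/

section AuxSubcat

variable {A B : Type u} [NonUnitalCStarAlgebra A] [NonUnitalCStarAlgebra B]

namespace Corr

variable (W : Corr A)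

lemma inner_zero_right (x : W.X) : W.inner x 0 = 0 := by
  have h := W.inner_smul_right 0 x 0
  rw [zero_smul, zero_smul] at h
  exact h

lemma inner_zero_left (x : W.X) : W.inner 0 x = 0 := by
  rw [← W.inner_star x 0, W.inner_zero_right, star_zero]

lemma inner_add_left (x y z : W.X) :
    W.inner (x + y) z = W.inner x z + W.inner y z := by
  rw [← W.inner_star z (x + y), W.inner_add_right, star_add,
    W.inner_star, W.inner_star]

lemma inner_smul_left (c : ℂ) (x y : W.X) :
    W.inner (c • x) y = (starRingEnd ℂ c) • W.inner x y := by
  rw [← W.inner_star y (c • x), W.inner_smul_right, star_smul,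
    W.inner_star]
  rfl

lemma inner_neg_left (x y : W.X) : W.inner (-x) y = - W.inner x y := by
  have h := W.inner_smul_left (-1) x y
  rw [neg_one_smul] at h
  rw [h]
  simp

lemma inner_neg_right (x y : W.X) : W.inner x (-y) = - W.inner x y := by
  have h := W.inner_smul_right (-1) x y
  rw [neg_one_smul, neg_one_smul] at h
  exact h

lemma inner_sub_left (x y z : W.X) :
    W.inner (x - y) z = W.inner x z - W.inner y z := by
  rw [sub_eq_add_neg, W.inner_add_left, W.inner_neg_left, sub_eq_add_neg]

lemma inner_sub_right (x y z : W.X) :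
    W.inner x (y - z) = W.inner x y - W.inner x z := by
  rw [sub_eq_add_neg, W.inner_add_right, W.inner_neg_right, sub_eq_add_neg]

lemma inner_ract_left (x : W.X) (a : A) (y : W.X) :
    W.inner (W.ract x a) y = star a * W.inner x y := by
  rw [← W.inner_star y (W.ract x a), W.inner_ract_right, star_mul, W.inner_star]

lemma ract_neg_right (x : W.X) (a : A) : W.ract x (-a) = - W.ract x a := by
  have h := W.ract_smul' (-1) x a
  rw [neg_one_smul, neg_one_smul] at h
  exact h

/-- the `A`-valued inner product as an additive hom in the second variable -/
def innerHomRight (x : W.X) : W.X →+ A :=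
  AddMonoidHom.mk' (W.inner x) (W.inner_add_right x)

/-- the `A`-valued inner product as an additive hom in the first variable -/
def innerHomLeft (y : W.X) : W.X →+ A :=
  AddMonoidHom.mk' (fun x => W.inner x y) (fun a b => W.inner_add_left a b y)

/-- the right action as an additive hom in the algebra variable -/
def ractHom (x : W.X) : A →+ W.X :=
  AddMonoidHom.mk' (W.ract x) (W.ract_add_right x)

lemma inner_sum_right {ι : Type*} (s : Finset ι) (x : W.X) (f : ι → W.X) :
    W.inner x (∑ i ∈ s, f i) = ∑ i ∈ s, W.inner x (f i) :=
  map_sum (W.innerHomRight x) f s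

lemma inner_sum_left {ι : Type*} (s : Finset ι) (f : ι → W.X) (y : W.X) :
    W.inner (∑ i ∈ s, f i) y = ∑ i ∈ s, W.inner (f i) y :=
  map_sum (W.innerHomLeft y) f s

lemma ract_sum {ι : Type*} (s : Finset ι) (x : W.X) (f : ι → A) :
    W.ract x (∑ i ∈ s, f i) = ∑ i ∈ s, W.ract x (f i) :=
  map_sum (W.ractHom x) f s

/-- polarization-type bound -/
lemma norm_inner_le_sq (z w : W.X) : ‖W.inner z w‖ ≤ (‖z‖ + ‖w‖) ^ 2 := by
  have expand : ∀ c : ℂ, W.inner (z + c • w) (z + c • w) =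
      W.inner z z + c • W.inner z w + (starRingEnd ℂ c) • W.inner w z +
        (starRingEnd ℂ c * c) • W.inner w w := by
    intro c
    simp only [W.inner_add_left, W.inner_add_right, W.inner_smul_left,
      W.inner_smul_right, smul_smul]
    module
  have pol : (4 : ℂ) • W.inner z w =
      W.inner (z + (1 : ℂ) • w) (z + (1 : ℂ) • w)
      - W.inner (z + (-1 : ℂ) • w) (z + (-1 : ℂ) • w)
      - Complex.I • W.inner (z + Complex.I • w) (z + Complex.I • w)
      + Complex.I • W.inner (z + (-Complex.I) • w) (z + (-Complex.I) • w) := by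
    rw [expand 1, expand (-1), expand Complex.I, expand (-Complex.I)]
    simp only [map_one, map_neg, Complex.conj_I, one_mul, neg_mul, neg_neg,
      Complex.I_mul_I, mul_neg, mul_one, one_smul, neg_smul, smul_add, smul_sub,
      smul_neg, smul_smul]
    module
  have hnorm : (4 : ℝ) * ‖W.inner z w‖ = ‖(4 : ℂ) • W.inner z w‖ := by
    rw [norm_smul]
    norm_num
  have hbound : ∀ c : ℂ, ‖c‖ = 1 →
      ‖W.inner (z + c • w) (z + c • w)‖ ≤ (‖z‖ + ‖w‖) ^ 2 := by
    intro c hc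
    rw [← W.norm_eq]
    have : ‖z + c • w‖ ≤ ‖z‖ + ‖w‖ := by
      calc ‖z + c • w‖ ≤ ‖z‖ + ‖c • w‖ := norm_add_le _ _
        _ = ‖z‖ + ‖w‖ := by rw [norm_smul, hc, one_mul]
    have h0 : (0:ℝ) ≤ ‖z + c • w‖ := norm_nonneg _
    nlinarith
  have hI : ∀ b : A, ‖Complex.I • b‖ = ‖b‖ := by
    intro b; rw [norm_smul]; simp
  obtain ⟨P1, P2, P3, P4, hpol, b1, b2, b3, b4⟩ :
      ∃ P1 P2 P3 P4 : A, (4 : ℂ) • W.inner z w = P1 - P2 - Complex.I • P3 + Complex.I • P4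
        ∧ ‖P1‖ ≤ (‖z‖ + ‖w‖) ^ 2 ∧ ‖P2‖ ≤ (‖z‖ + ‖w‖) ^ 2
        ∧ ‖P3‖ ≤ (‖z‖ + ‖w‖) ^ 2 ∧ ‖P4‖ ≤ (‖z‖ + ‖w‖) ^ 2 :=
    ⟨_, _, _, _, pol, hbound 1 (by simp), hbound (-1) (by simp),
      hbound Complex.I (by simp), hbound (-Complex.I) (by simp)⟩
  have hle : (4 : ℝ) * ‖W.inner z w‖ ≤ 4 * (‖z‖ + ‖w‖) ^ 2 := by
    rw [hnorm, hpol]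
    have a1 := norm_add_le (P1 - P2 - Complex.I • P3) (Complex.I • P4)
    have a2 := norm_sub_le (P1 - P2) (Complex.I • P3)
    have a3 := norm_sub_le P1 P2
    rw [hI P3] at a2
    rw [hI P4] at a1
    linarith
  linarith

/-- Cauchy–Schwarz with a (suboptimal) universal constant -/
lemma norm_inner_le (z w : W.X) : ‖W.inner z w‖ ≤ 4 * ‖z‖ * ‖w‖ := by
  rcases eq_or_ne z 0 with rfl | hz
  · rw [W.inner_zero_left]
    simp
  rcases eq_or_ne w 0 with rfl | hw
  · rw [W.inner_zero_right]
    simp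
  have hz' : 0 < ‖z‖ := norm_pos_iff.mpr hz
  have hw' : 0 < ‖w‖ := norm_pos_iff.mpr hw
  set t : ℝ := Real.sqrt (‖w‖ / ‖z‖) with ht_def
  have ht : 0 < t := Real.sqrt_pos.mpr (by positivity)
  have ht2 : t ^ 2 = ‖w‖ / ‖z‖ := Real.sq_sqrt (by positivity)
  have hEq : W.inner z w = W.inner ((t : ℂ) • z) (((t : ℂ)⁻¹) • w) := by
    rw [W.inner_smul_left, W.inner_smul_right, smul_smul]
    have hC : (starRingEnd ℂ (t : ℂ)) * (t : ℂ)⁻¹ = 1 := by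
      rw [Complex.conj_ofReal]
      rw [mul_inv_cancel₀]
      exact_mod_cast ht.ne'
    rw [hC, one_smul]
  have hb := W.norm_inner_le_sq ((t : ℂ) • z) (((t : ℂ)⁻¹) • w)
  rw [← hEq] at hb
  have hnz : ‖(t : ℂ) • z‖ = t * ‖z‖ := by
    rw [norm_smul, Complex.norm_real, Real.norm_of_nonneg ht.le]
  have hnw : ‖((t : ℂ)⁻¹) • w‖ = t⁻¹ * ‖w‖ := by
    rw [norm_smul, norm_inv, Complex.norm_real, Real.norm_of_nonneg ht.le]
  rw [hnz, hnw] at hb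
  have hkey : (t * ‖z‖ + t⁻¹ * ‖w‖) ^ 2 = 4 * ‖z‖ * ‖w‖ := by
    have h1 : t * t = ‖w‖ / ‖z‖ := by rw [← sq]; exact ht2
    have h2 : t⁻¹ * t⁻¹ = ‖z‖ / ‖w‖ := by
      rw [← mul_inv, h1, inv_div]
    have htt : t * t⁻¹ = 1 := mul_inv_cancel₀ ht.ne'
    calc (t * ‖z‖ + t⁻¹ * ‖w‖) ^ 2
        = (t * t) * (‖z‖ * ‖z‖) + 2 * ((t * t⁻¹) * (‖z‖ * ‖w‖))
          + (t⁻¹ * t⁻¹) * (‖w‖ * ‖w‖) := by ring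
      _ = 4 * ‖z‖ * ‖w‖ := by
          rw [h1, h2, htt]
          field_simp
          ring
  linarith [hb, hkey.le]

lemma eq_of_forall_inner_left {p q : W.X}
    (h : ∀ z, W.inner p z = W.inner q z) : p = q := by
  have h0 : W.inner (p - q) (p - q) = 0 := by
    rw [W.inner_sub_left, h (p - q), sub_self]
  have h1 : ‖p - q‖ ^ 2 = 0 := by rw [W.norm_eq, h0, norm_zero]
  have h2 : ‖p - q‖ = 0 := by
    have := pow_eq_zero_iff (n := 2) (by norm_num) |>.mp h1
    exact this
  exact sub_eq_zero.mp (norm_eq_zero.mp h2)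

lemma rankOne_smul_left (c : ℂ) (x y : W.X) :
    W.rankOne (c • x) y = c • W.rankOne x y := by
  ext z
  rw [W.rankOne_apply, ContinuousLinearMap.smul_apply, W.rankOne_apply, W.ract_smul]

lemma rankOne_neg_right (x y : W.X) :
    W.rankOne x (-y) = - W.rankOne x y := by
  ext z
  rw [W.rankOne_apply, ContinuousLinearMap.neg_apply, W.rankOne_apply,
    W.inner_neg_left, W.ract_neg_right]

/-- formal adjoint identity for sums of rank-one operators -/
lemma adj_inner {ι : Type*} [Fintype ι] (x y : ι → W.X) (w z : W.X) :
    W.inner ((∑ r, W.rankOne (y r) (x r)) w) z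
      = W.inner w ((∑ r, W.rankOne (x r) (y r)) z) := by
  rw [ContinuousLinearMap.sum_apply, ContinuousLinearMap.sum_apply,
    W.inner_sum_left, W.inner_sum_right]
  refine Finset.sum_congr rfl fun r _ => ?_
  rw [W.rankOne_apply, W.rankOne_apply, W.inner_ract_left, W.inner_ract_right,
    ← W.inner_star (x r) w]

/-- norm bound for the formal adjoint of a sum of rank-one operators -/
lemma adj_norm_le {ι : Type*} [Fintype ι] (x y : ι → W.X) :
    ‖∑ r, W.rankOne (y r) (x r)‖ ≤ 4 * ‖∑ r, W.rankOne (x r) (y r)‖ := by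
  set k := ∑ r, W.rankOne (x r) (y r) with hk
  set k' := ∑ r, W.rankOne (y r) (x r) with hk'
  refine ContinuousLinearMap.opNorm_le_bound _ (by positivity) fun w => ?_
  have h1 : ‖k' w‖ ^ 2 = ‖W.inner (k' w) (k' w)‖ := W.norm_eq _
  have h2 : W.inner (k' w) (k' w) = W.inner w (k (k' w)) := W.adj_inner x y w (k' w)
  have h3 : ‖W.inner w (k (k' w))‖ ≤ 4 * ‖w‖ * ‖k (k' w)‖ := W.norm_inner_le _ _
  have h4 : ‖k (k' w)‖ ≤ ‖k‖ * ‖k' w‖ := k.le_opNorm _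
  have h5 : ‖k' w‖ ^ 2 ≤ 4 * ‖w‖ * (‖k‖ * ‖k' w‖) := by
    rw [h1, h2]
    calc ‖W.inner w (k (k' w))‖ ≤ 4 * ‖w‖ * ‖k (k' w)‖ := h3
      _ ≤ 4 * ‖w‖ * (‖k‖ * ‖k' w‖) := by
          have : (0:ℝ) ≤ 4 * ‖w‖ := by positivity
          exact mul_le_mul_of_nonneg_left h4 this
  rcases (norm_nonneg (k' w)).eq_or_lt with h0 | h0
  · rw [← h0]; positivity
  · have := (mul_le_mul_iff_left₀ h0).mp (by nlinarith [h5] : ‖k' w‖ * ‖k' w‖ ≤ (4 * ‖k‖ * ‖w‖) * ‖k' w‖)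
    exact this

end Corr

/- basic consequences of being a representation -/
namespace IsRep

variable {W : Corr A} {π : A → B} {t : W.X → B} (h : IsRep W π t)

/-- `π` bundled as a non-unital star algebra homomorphism -/
noncomputable def piHom : A →⋆ₙₐ[ℂ] B where
  toFun := π
  map_add' := h.hom.map_add
  map_mul' := h.hom.map_mul
  map_star' := h.hom.map_star
  map_smul' := h.hom.map_smul
  map_zero' := by
    have := h.hom.map_smul 0 0
    rwa [zero_smul, zero_smul] at this

include h

lemma pi_norm_le (a : A) : ‖π a‖ ≤ ‖a‖ :=
  NonUnitalStarAlgHom.norm_apply_le h.piHom a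

lemma pi_neg (a : A) : π (-a) = - π a := by
  have := h.hom.map_smul (-1) a
  rwa [neg_one_smul, neg_one_smul] at this

lemma pi_sub (a b : A) : π (a - b) = π a - π b := by
  rw [sub_eq_add_neg, h.hom.map_add, h.pi_neg, sub_eq_add_neg]

lemma pi_continuous : Continuous π := by
  have : LipschitzWith 1 π := by
    refine LipschitzWith.of_dist_le_mul fun a b => ?_
    rw [dist_eq_norm, dist_eq_norm, NNReal.coe_one, one_mul, ← h.pi_sub]
    exact h.pi_norm_le _
  exact this.continuous

lemma t_zero : t 0 = 0 := by
  have := h.t_smul 0 0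
  rwa [zero_smul, zero_smul] at this

lemma t_neg (x : W.X) : t (-x) = - t x := by
  have := h.t_smul (-1) x
  rwa [neg_one_smul, neg_one_smul] at this

lemma t_sub (x y : W.X) : t (x - y) = t x - t y := by
  rw [sub_eq_add_neg, h.t_add, h.t_neg, sub_eq_add_neg]

/-- `t` bundled as an additive hom -/
def tHom : W.X →+ B := AddMonoidHom.mk' t h.t_add

lemma t_sum {ι : Type*} (s : Finset ι) (f : ι → W.X) :
    t (∑ i ∈ s, f i) = ∑ i ∈ s, t (f i) :=
  map_sum h.tHom f s

lemma norm_t_le (x : W.X) : ‖t x‖ ≤ ‖x‖ := by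
  have h1 : ‖t x‖ * ‖t x‖ = ‖star (t x) * t x‖ := (CStarRing.norm_star_mul_self).symm
  have h2 : ‖star (t x) * t x‖ = ‖π (W.inner x x)‖ := by rw [h.inner]
  have h3 : ‖π (W.inner x x)‖ ≤ ‖W.inner x x‖ := h.pi_norm_le _
  have h4 : ‖W.inner x x‖ = ‖x‖ * ‖x‖ := by rw [← W.norm_eq]; ring
  nlinarith [norm_nonneg (t x), norm_nonneg x]

lemma t_continuous : Continuous t := by
  have : LipschitzWith 1 t := by
    refine LipschitzWith.of_dist_le_mul fun a b => ?_
    rw [dist_eq_norm, dist_eq_norm, NNReal.coe_one, one_mul, ← h.t_sub]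
    exact h.norm_t_le _
  exact this.continuous

end IsRep

section KeyBound

variable {W : Corr A}

/-- iterated application bound -/
lemma pow_apply_norm_le (hop : W.X →L[ℂ] W.X) :
    ∀ (m : ℕ) (w : W.X), ‖(hop ^ m) w‖ ≤ ‖hop‖ ^ m * ‖w‖ := by
  intro m
  induction m with
  | zero => intro w; simp
  | succ m ih =>
      intro w
      have : (hop ^ (m + 1)) w = (hop ^ m) (hop w) := by
        rw [pow_succ, ContinuousLinearMap.mul_apply]
      rw [this]
      calc ‖(hop ^ m) (hop w)‖ ≤ ‖hop‖ ^ m * ‖hop w‖ := ih (hop w)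
        _ ≤ ‖hop‖ ^ m * (‖hop‖ * ‖w‖) := by
            have : (0:ℝ) ≤ ‖hop‖ ^ m := by positivity
            exact mul_le_mul_of_nonneg_left (hop.le_opNorm w) this
        _ = ‖hop‖ ^ (m+1) * ‖w‖ := by ring

variable {C : Type u} [CStarAlgebra C] {π : A → C} {τ : W.X → C}

/-- the key power formula for values of symmetric finite-rank operators -/
lemma pow_formula (h : IsRep W π τ) {ι : Type*} [Fintype ι]
    (u v : ι → W.X)
    (hsym : ∀ w z, W.inner ((∑ i, W.rankOne (u i) (v i)) w) z
      = W.inner w ((∑ i, W.rankOne (u i) (v i)) z)) :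
    ∀ m : ℕ, (∑ i, τ (u i) * star (τ (v i))) ^ (m + 1)
      = ∑ i, τ (u i) * star (τ (((∑ i, W.rankOne (u i) (v i)) ^ m) (v i))) := by
  set hop := ∑ i, W.rankOne (u i) (v i) with hhop
  have hflip : ∀ w, (∑ i, W.rankOne (v i) (u i)) w = hop w := by
    intro w
    refine W.eq_of_forall_inner_left fun z => ?_
    rw [W.adj_inner (x := u) (y := v) w z, ← hsym w z]
  intro m
  induction m with
  | zero =>
      rw [pow_one]
      refine Finset.sum_congr rfl fun i _ => ?_
      rw [pow_zero, ContinuousLinearMap.one_apply]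
  | succ m ih =>
      rw [pow_succ, ih, Finset.sum_mul_sum]
      have step : ∀ j, ∑ i, (τ (u j) * star (τ ((hop ^ m) (v j)))) * (τ (u i) * star (τ (v i)))
          = τ (u j) * star (τ ((hop ^ (m+1)) (v j))) := by
        intro j
        have term : ∀ i, (τ (u j) * star (τ ((hop ^ m) (v j)))) * (τ (u i) * star (τ (v i)))
            = τ (u j) * star (τ (W.rankOne (v i) (u i) ((hop ^ m) (v j)))) := by
          intro i
          have e1 : star (τ ((hop ^ m) (v j))) * τ (u i) =
              π (W.inner ((hop ^ m) (v j)) (u i)) := h.inner _ _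
          have e2 : π (W.inner ((hop ^ m) (v j)) (u i)) * star (τ (v i)) =
              star (τ (W.ract (v i) (W.inner (u i) ((hop ^ m) (v j))))) := by
            rw [h.ract, star_mul, ← h.hom.map_star, W.inner_star]
          calc (τ (u j) * star (τ ((hop ^ m) (v j)))) * (τ (u i) * star (τ (v i)))
              = τ (u j) * ((star (τ ((hop ^ m) (v j))) * τ (u i)) * star (τ (v i))) := by
                simp only [mul_assoc]
            _ = τ (u j) * star (τ (W.ract (v i) (W.inner (u i) ((hop ^ m) (v j))))) := by
                rw [e1, e2]
            _ = τ (u j) * star (τ (W.rankOne (v i) (u i) ((hop ^ m) (v j)))) := by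
                rw [W.rankOne_apply]
        calc ∑ i, (τ (u j) * star (τ ((hop ^ m) (v j)))) * (τ (u i) * star (τ (v i)))
            = ∑ i, τ (u j) * star (τ (W.rankOne (v i) (u i) ((hop ^ m) (v j)))) :=
              Finset.sum_congr rfl fun i _ => term i
          _ = τ (u j) * star (τ (∑ i, W.rankOne (v i) (u i) ((hop ^ m) (v j)))) := by
              rw [h.t_sum, star_sum, Finset.mul_sum]
          _ = τ (u j) * star (τ ((hop ^ (m+1)) (v j))) := by
              have : ∑ i, W.rankOne (v i) (u i) ((hop ^ m) (v j))
                  = (hop ^ (m+1)) (v j) := by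
                rw [← ContinuousLinearMap.sum_apply, hflip, pow_succ',
                  ContinuousLinearMap.mul_apply]
              rw [this]
      exact Finset.sum_congr rfl fun j _ => step j

/-- selfadjoint elements: norm of `2 ^ m`-th powers -/
lemma sa_norm_pow_two_pow {b : C} (hb : IsSelfAdjoint b) (m : ℕ) :
    ‖b ^ (2 ^ m)‖ = ‖b‖ ^ (2 ^ m) := by
  induction m with
  | zero => norm_num
  | succ m ih =>
      have h1 : b ^ (2 ^ (m + 1)) = (b ^ (2 ^ m)) ^ 2 := by
        rw [← pow_mul, pow_succ]
      have hsa : IsSelfAdjoint (b ^ (2 ^ m)) := hb.pow _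
      have h2 : ‖(b ^ (2 ^ m)) ^ 2‖ = ‖b ^ (2 ^ m)‖ ^ 2 := by
        rw [sq, sq]
        nth_rewrite 1 [← hsa.star_eq]
        rw [CStarRing.norm_star_mul_self]
      rw [h1, h2, ih, ← pow_mul, pow_succ]

/-- **Key bound** (unital codomain): the value of a representation on a
finite-rank operator is controlled by the operator norm. -/
lemma key_bound_unital (h : IsRep W π τ) {ι : Type*} [Fintype ι] (x y : ι → W.X) :
    ‖∑ r, τ (x r) * star (τ (y r))‖ ≤ 2 * ‖∑ r, W.rankOne (x r) (y r)‖ := by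
  classical
  set k := ∑ r, W.rankOne (x r) (y r) with hk
  set S := ∑ r, τ (x r) * star (τ (y r)) with hS
  set u : ι × ι → W.X := fun j => W.ract (y j.1) (W.inner (x j.1) (x j.2)) with hu
  set v : ι × ι → W.X := fun j => y j.2 with hv
  set hop := ∑ j, W.rankOne (u j) (v j) with hhop
  have hterm : ∀ (r s : ι) (w : W.X), W.rankOne (u (r,s)) (v (r,s)) w
      = W.rankOne (y r) (x r) (W.rankOne (x s) (y s) w) := by
    intro r s w
    simp only [hu, hv, W.rankOne_apply]
    rw [W.inner_ract_right, W.ract_mul]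
  have hcomp : ∀ w, hop w = (∑ r, W.rankOne (y r) (x r)) (k w) := by
    intro w
    rw [hhop, ContinuousLinearMap.sum_apply, ← Finset.univ_product_univ,
      Finset.sum_product, ContinuousLinearMap.sum_apply]
    refine Finset.sum_congr rfl fun r _ => ?_
    rw [hk, ContinuousLinearMap.sum_apply, map_sum (W.rankOne (y r) (x r))]
    exact Finset.sum_congr rfl fun s _ => hterm r s w
  have hsym : ∀ w z, W.inner (hop w) z = W.inner w (hop z) := by
    intro w z
    rw [hcomp w, hcomp z, W.adj_inner (x := x) (y := y) (k w) z,
      ← W.inner_star (k z) (k w), ← W.adj_inner (x := x) (y := y) (k z) w,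
      W.inner_star]
  -- value of hop family is star S * S
  have hbval : ∑ j, τ (u j) * star (τ (v j)) = star S * S := by
    have hstarS : star S = ∑ r, τ (y r) * star (τ (x r)) := by
      rw [hS, star_sum]
      refine Finset.sum_congr rfl fun r _ => ?_
      rw [star_mul, star_star]
    rw [hstarS, hS, Finset.sum_mul_sum, ← Finset.univ_product_univ,
      Finset.sum_product]
    refine Finset.sum_congr rfl fun r _ => Finset.sum_congr rfl fun s _ => ?_
    simp only [hu, hv]
    rw [h.ract, ← h.inner]
    simp only [mul_assoc]
  set b := star S * S with hb
  have hbsa : IsSelfAdjoint b := IsSelfAdjoint.star_mul_self S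
  set C' := ∑ j : ι × ι, ‖u j‖ * ‖v j‖ with hC
  have hCnn : 0 ≤ C' := Finset.sum_nonneg fun j _ => by positivity
  have hbound : ∀ m : ℕ, ‖b ^ (m + 1)‖ ≤ C' * ‖hop‖ ^ m := by
    intro m
    rw [← hbval, pow_formula h u v hsym m]
    calc ‖∑ j, τ (u j) * star (τ ((hop ^ m) (v j)))‖
        ≤ ∑ j, ‖τ (u j) * star (τ ((hop ^ m) (v j)))‖ := norm_sum_le _ _
      _ ≤ ∑ j, ‖u j‖ * (‖hop‖ ^ m * ‖v j‖) := by
          refine Finset.sum_le_sum fun j _ => ?_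
          calc ‖τ (u j) * star (τ ((hop ^ m) (v j)))‖
              ≤ ‖τ (u j)‖ * ‖star (τ ((hop ^ m) (v j)))‖ := norm_mul_le _ _
            _ = ‖τ (u j)‖ * ‖τ ((hop ^ m) (v j))‖ := by rw [norm_star]
            _ ≤ ‖u j‖ * (‖hop‖ ^ m * ‖v j‖) := by
                refine mul_le_mul (h.norm_t_le _) ?_ (norm_nonneg _) (norm_nonneg _)
                exact (h.norm_t_le _).trans (pow_apply_norm_le hop m (v j))
      _ = C' * ‖hop‖ ^ m := by
          rw [hC, Finset.sum_mul]
          exact Finset.sum_congr rfl fun j _ => by ring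
  have hbh : ‖b‖ ≤ ‖hop‖ := by
    rcases (norm_nonneg hop).eq_or_lt with hH0 | hHpos
    · have h1 := hbound 1
      rw [← hH0] at h1
      have h2 : ‖b ^ 2‖ ≤ 0 := by simpa using h1
      have h3 : ‖b‖ ^ 2 ≤ 0 := by
        have := sa_norm_pow_two_pow hbsa 1
        norm_num at this
        rw [this] at h2
        exact h2
      have : ‖b‖ = 0 := by nlinarith [norm_nonneg b]
      rw [this, ← hH0]
    · by_contra hlt
      push_neg at hlt
      set q := ‖b‖ / ‖hop‖ with hq
      have hq1 : 1 < q := (one_lt_div hHpos).mpr hlt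
      obtain ⟨nn, hnn⟩ := pow_unbounded_of_one_lt (C' / ‖hop‖) hq1
      have hple : nn ≤ 2 ^ nn := (Nat.lt_two_pow_self (n := nn)).le
      have hmono : q ^ nn ≤ q ^ (2 ^ nn) := pow_le_pow_right₀ hq1.le hple
      set p := 2 ^ nn with hp
      have hp1 : 1 ≤ p := Nat.one_le_two_pow
      have hb2 : ‖b‖ ^ p ≤ C' * ‖hop‖ ^ (p - 1) := by
        have := hbound (p - 1)
        rwa [Nat.sub_add_cancel hp1, hp, sa_norm_pow_two_pow hbsa nn, ← hp] at this
      have hHp : (0:ℝ) < ‖hop‖ ^ (p - 1) := pow_pos hHpos _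
      have hsplit : ‖hop‖ ^ p = ‖hop‖ ^ (p - 1) * ‖hop‖ := by
        conv_lhs => rw [← Nat.sub_add_cancel hp1]
        rw [pow_succ]
      have hqp : q ^ p * ‖hop‖ ≤ C' := by
        have h1 : q ^ p * ‖hop‖ ^ p = ‖b‖ ^ p := by
          rw [hq, div_pow, div_mul_cancel₀]
          exact (pow_pos hHpos p).ne'
        have h2 : q ^ p * (‖hop‖ ^ (p-1) * ‖hop‖) ≤ C' * ‖hop‖ ^ (p-1) := by
          rw [← hsplit, h1]; exact hb2
        have h3 : (q ^ p * ‖hop‖) * ‖hop‖ ^ (p-1) ≤ C' * ‖hop‖ ^ (p-1) := by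
          nlinarith [h2]
        exact le_of_mul_le_mul_right h3 hHp
      have : q ^ p ≤ C' / ‖hop‖ := (le_div_iff₀ hHpos).mpr hqp
      linarith [hmono.trans this, hnn]
  -- conclude
  have hfin : ‖S‖ * ‖S‖ ≤ 4 * (‖k‖ * ‖k‖) := by
    have h1 : ‖S‖ * ‖S‖ = ‖b‖ := by rw [hb, CStarRing.norm_star_mul_self]
    have h2 : ‖hop‖ ≤ ‖∑ r, W.rankOne (y r) (x r)‖ * ‖k‖ := by
      have heq : hop = (∑ r, W.rankOne (y r) (x r)).comp k := by
        ext w; rw [ContinuousLinearMap.comp_apply]; exact hcomp w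
      rw [heq]
      exact ContinuousLinearMap.opNorm_comp_le _ _
    have h4 : ‖∑ r, W.rankOne (y r) (x r)‖ ≤ 4 * ‖k‖ := W.adj_norm_le x y
    nlinarith [hbh, h2, h4, norm_nonneg k,
      norm_nonneg (∑ r, W.rankOne (y r) (x r)), norm_nonneg hop]
  nlinarith [norm_nonneg S, norm_nonneg k, hfin]

end KeyBound

/-- **Key bound**: for any representation into a non-unital C*-algebra. -/
lemma key_bound {W : Corr A} {π : A → B} {τ : W.X → B} (h : IsRep W π τ)
    {ι : Type*} [Fintype ι] (x y : ι → W.X) :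
    ‖∑ r, τ (x r) * star (τ (y r))‖ ≤ 2 * ‖∑ r, W.rankOne (x r) (y r)‖ := by
  have hrep : IsRep W (fun a => (π a : Unitization ℂ B))
      (fun x => (τ x : Unitization ℂ B)) := by
    refine ⟨⟨?_, ?_, ?_, ?_⟩, ?_, ?_, ?_, ?_, ?_⟩
    · intro a b; rw [h.hom.map_add, Unitization.inr_add]
    · intro a b; rw [h.hom.map_mul, Unitization.inr_mul]
    · intro a; rw [h.hom.map_star, Unitization.inr_star]
    · intro c a; rw [h.hom.map_smul, Unitization.inr_smul]
    · intro a b; rw [h.t_add, Unitization.inr_add]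
    · intro c a; rw [h.t_smul, Unitization.inr_smul]
    · intro a x
      rw [h.lact, Unitization.inr_mul]
    · intro x a
      rw [h.ract, Unitization.inr_mul]
    · intro x y
      rw [← Unitization.inr_star, ← Unitization.inr_mul, h.inner]
  have hkey := key_bound_unital hrep x y
  have hsum : ∑ r, ((τ (x r) : Unitization ℂ B)) * star ((τ (y r) : Unitization ℂ B))
      = ((∑ r, τ (x r) * star (τ (y r)) : B) : Unitization ℂ B) := by
    simp only [← Unitization.inrNonUnitalStarAlgHom_apply (R := ℂ)]
    rw [map_sum]
    refine Finset.sum_congr rfl fun r _ => ?_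
    rw [map_mul, map_star]
  rw [hsum, Unitization.norm_inr] at hkey
  exact hkey

/-- every element of the span of rank-one operators is a finite sum of
rank-one operators -/
lemma span_rankOne_eq_sum (W : Corr A) {z : W.X →L[ℂ] W.X}
    (hz : z ∈ Submodule.span ℂ {T : W.X →L[ℂ] W.X | ∃ x y, T = W.rankOne x y}) :
    ∃ (n : ℕ) (u v : Fin n → W.X), z = ∑ r, W.rankOne (u r) (v r) := by
  induction hz using Submodule.span_induction with
  | mem T hT =>
      obtain ⟨x, y, rfl⟩ := hT
      exact ⟨1, fun _ => x, fun _ => y, by simp⟩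
  | zero => exact ⟨0, Fin.elim0, Fin.elim0, by simp⟩
  | add p q hp hq ihp ihq =>
      obtain ⟨n1, u1, v1, rfl⟩ := ihp
      obtain ⟨n2, u2, v2, rfl⟩ := ihq
      refine ⟨n1 + n2, Fin.append u1 u2, Fin.append v1 v2, ?_⟩
      rw [Fin.sum_univ_add]
      simp [Fin.append_left, Fin.append_right]
  | smul c p hp ihp =>
      obtain ⟨n, u, v, rfl⟩ := ihp
      refine ⟨n, fun r => c • u r, v, ?_⟩
      rw [Finset.smul_sum]
      exact Finset.sum_congr rfl fun r _ => (W.rankOne_smul_left c (u r) (v r)).symm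

/-- for a regular correspondence with covariant representation, `π c` is a
limit of sums `σ(u) σ(v)*` -/
lemma pi_approx (W : Corr A) (hreg : W.Regular) {π : A → B} {σ : W.X → B}
    (hc : CPCov W π σ) (c : A) :
    ∃ (N : ℕ → ℕ) (u v : ∀ n, Fin (N n) → W.X),
      Tendsto (fun n => ∑ r, σ (u n r) * star (σ (v n r))) atTop (𝓝 (π c)) := by
  have hmem := hreg.2 c
  obtain ⟨g, hgmem, hgconv⟩ := mem_closure_iff_seq_limit.mp hmem
  have hdecomp : ∀ n, ∃ (nn : ℕ) (u v : Fin nn → W.X),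
      g n = ∑ r, W.rankOne (u r) (v r) := fun n => span_rankOne_eq_sum W (hgmem n)
  choose N u v hrepr using hdecomp
  refine ⟨N, u, v, ?_⟩
  apply hc c N u v
  have : (fun n => ∑ r, W.rankOne (u n r) (v n r)) = g := by
    funext n; rw [← hrepr n]
  rw [this]
  exact hgconv

/-- right multiplication approximation via functional calculus: every `x`
is a limit of `x · a` -/
lemma ract_approx (W : Corr A) (x : W.X) :
    ∃ e : ℕ → A, Tendsto (fun n => W.ract x (e n)) atTop (𝓝 x) := by
  set h : A := W.inner x x with hh
  have hsa : IsSelfAdjoint h := by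
    rw [IsSelfAdjoint]
    exact W.inner_star x x
  set f : ℕ → ℝ → ℝ := fun n t => t ^ 2 / (t ^ 2 + (1 / (n + 1))) with hf
  have hcpos : ∀ n : ℕ, (0:ℝ) < 1 / (n + 1) := fun n => by positivity
  have hfcont : ∀ n, Continuous (f n) := by
    intro n
    apply Continuous.div (by fun_prop) (by fun_prop)
    intro t
    have := hcpos n
    positivity
  have hf0 : ∀ n, f n 0 = 0 := fun n => by simp [hf]
  set e : ℕ → A := fun n => cfcₙ (f n) h with he
  refine ⟨e, ?_⟩
  have hesa : ∀ n, IsSelfAdjoint (e n) := fun n => cfcₙ_predicate (f n) h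
  -- the inner product of the difference
  have hidc : Continuous (fun t : ℝ => t) := continuous_id
  have hInner : ∀ n, W.inner (x - W.ract x (e n)) (x - W.ract x (e n))
      = cfcₙ (fun t => t * (1 - f n t) ^ 2) h := by
    intro n
    have c1 : ContinuousOn (fun t : ℝ => t) (quasispectrum ℝ h) := hidc.continuousOn
    have cf : ContinuousOn (f n) (quasispectrum ℝ h) := (hfcont n).continuousOn
    have cq : ContinuousOn (fun t : ℝ => t * f n t) (quasispectrum ℝ h) :=
      (hidc.mul (hfcont n)).continuousOn
    have e1 : W.inner x (W.ract x (e n)) = h * e n := by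
      rw [W.inner_ract_right]
    have e2 : W.inner (W.ract x (e n)) x = e n * h := by
      rw [W.inner_ract_left, (hesa n).star_eq]
    have e3 : W.inner (W.ract x (e n)) (W.ract x (e n)) = e n * (h * e n) := by
      rw [W.inner_ract_right, W.inner_ract_left, (hesa n).star_eq, mul_assoc]
    have expand : W.inner (x - W.ract x (e n)) (x - W.ract x (e n))
        = h - h * e n - (e n * h - e n * (h * e n)) := by
      rw [W.inner_sub_left, W.inner_sub_right, W.inner_sub_right, e1, e2, e3, hh]
    have hm1 : cfcₙ (fun t : ℝ => t * f n t) h = h * e n := by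
      have := cfcₙ_mul (fun t : ℝ => t) (f n) h c1 rfl cf (hf0 n)
      rw [cfcₙ_id' ℝ h] at this
      exact this
    have hm2 : cfcₙ (fun t : ℝ => f n t * t) h = e n * h := by
      have := cfcₙ_mul (f n) (fun t : ℝ => t) h cf (hf0 n) c1 rfl
      rw [cfcₙ_id' ℝ h] at this
      exact this
    have hm3 : cfcₙ (fun t : ℝ => f n t * (t * f n t)) h = e n * (h * e n) := by
      have := cfcₙ_mul (f n) (fun t : ℝ => t * f n t) h cf (hf0 n) cq (by simp)
      rw [hm1] at this
      exact this
    have hsub2 : cfcₙ (fun t : ℝ => t - t * f n t) h = h - h * e n := by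
      rw [cfcₙ_sub (fun t : ℝ => t) (fun t : ℝ => t * f n t) h c1 rfl cq (by simp),
        cfcₙ_id' ℝ h, hm1]
    have hsub1 : cfcₙ (fun t : ℝ => f n t * t - f n t * (t * f n t)) h
        = e n * h - e n * (h * e n) := by
      rw [cfcₙ_sub (fun t : ℝ => f n t * t) (fun t : ℝ => f n t * (t * f n t)) h
        ((hfcont n).mul hidc).continuousOn (by simp)
        ((hfcont n).mul (hidc.mul (hfcont n))).continuousOn (by simp), hm2, hm3]
    have hcomb : cfcₙ (fun t : ℝ => (t - t * f n t) - (f n t * t - f n t * (t * f n t))) h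
        = (h - h * e n) - (e n * h - e n * (h * e n)) := by
      rw [cfcₙ_sub (fun t : ℝ => t - t * f n t)
        (fun t : ℝ => f n t * t - f n t * (t * f n t)) h
        (hidc.sub (hidc.mul (hfcont n))).continuousOn (by simp)
        (((hfcont n).mul hidc).sub ((hfcont n).mul (hidc.mul (hfcont n)))).continuousOn
        (by simp), hsub2, hsub1]
    rw [expand, ← hcomb]
    exact cfcₙ_congr fun t _ => by ring
  -- pointwise bound
  have hptbound : ∀ (n : ℕ) (t : ℝ),
      |t * (1 - f n t) ^ 2| ≤ Real.sqrt (1 / (n + 1)) := by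
    intro n t
    set c : ℝ := 1 / (n + 1) with hc
    have hc0 : 0 < c := hcpos n
    set r : ℝ := Real.sqrt c with hr
    have hr0 : 0 < r := Real.sqrt_pos.mpr hc0
    have hr2 : r ^ 2 = c := Real.sq_sqrt hc0.le
    have hs : (0:ℝ) < t ^ 2 + c := by positivity
    have h1mf : 1 - f n t = c / (t ^ 2 + c) := by
      simp only [hf]
      rw [← hc, eq_div_iff hs.ne', sub_mul, div_mul_cancel₀ _ hs.ne']
      ring
    rw [h1mf]
    have habs : |t * (c / (t ^ 2 + c)) ^ 2| = |t| * (c / (t ^ 2 + c)) ^ 2 := by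
      rw [abs_mul, abs_of_nonneg (by positivity : (0:ℝ) ≤ (c / (t ^ 2 + c)) ^ 2)]
    rw [habs, div_pow, ← mul_div_assoc, div_le_iff₀ (by positivity)]
    have habs2 : |t| ^ 2 * r ^ 3 = t ^ 2 * r ^ 3 := by rw [sq_abs]
    rw [← hr2]
    nlinarith [mul_nonneg hr0.le (sq_nonneg (|t| * r - r ^ 2)),
      mul_nonneg hr0.le (sq_nonneg (t * t)), abs_nonneg t, hr0.le, habs2,
      mul_nonneg (sq_nonneg t) (pow_nonneg hr0.le 3),
      pow_nonneg hr0.le 5, sq_abs t]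
  -- norm bound
  have hnormsq : ∀ n, ‖x - W.ract x (e n)‖ ^ 2 ≤ Real.sqrt (1 / (n + 1)) := by
    intro n
    rw [W.norm_eq, hInner n]
    apply norm_cfcₙ_le
    intro t _
    rw [Real.norm_eq_abs]
    exact hptbound n t
  have hnorm : ∀ n, ‖x - W.ract x (e n)‖ ≤ Real.sqrt (Real.sqrt (1 / (n + 1))) := by
    intro n
    have := hnormsq n
    have h0 : (0:ℝ) ≤ ‖x - W.ract x (e n)‖ := norm_nonneg _
    nlinarith [Real.sq_sqrt (Real.sqrt_nonneg (1 / ((n:ℝ) + 1))),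
      Real.sqrt_nonneg (Real.sqrt (1 / ((n:ℝ) + 1)))]
  have htend : Tendsto (fun n : ℕ => Real.sqrt (Real.sqrt (1 / (n + 1)))) atTop (𝓝 0) := by
    have h1 : Tendsto (fun n : ℕ => 1 / ((n:ℝ) + 1)) atTop (𝓝 0) :=
      tendsto_one_div_add_atTop_nhds_zero_nat
    have h2 := (Real.continuous_sqrt.tendsto 0).comp h1
    rw [Real.sqrt_zero] at h2
    have h3 := (Real.continuous_sqrt.tendsto 0).comp h2
    rwa [Real.sqrt_zero] at h3
  rw [tendsto_iff_dist_tendsto_zero]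
  apply squeeze_zero (fun n => dist_nonneg) _ htend
  intro n
  rw [dist_eq_norm, norm_sub_rev]
  exact hnorm n

end AuxSubcat

/-- Lemma `subcat`.  If `(π,σ)` and `(π,ω)` are
Cuntz–Pimsner covariant representations of the nondegenerate regular
correspondences `X` and `Y` in `B` with the same `π`, then the product
representation `(π, σω)` of `X ⊗_A Y`, determined on elementary tensors by
`(σω)(x ⊗ y) = σ(x) ω(y)`, is Cuntz–Pimsner covariant.  (Hence the full
subcategory `𝒢ᴮ_c` of covariantly represented correspondences is closed
under the monoidal product of `𝒢ᴮ`, i.e. it is a monoidal subcategory.) -/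
theorem product_of_covariant_reps_is_covariant
    {A B : Type u} [NonUnitalCStarAlgebra A] [NonUnitalCStarAlgebra B]
    (W V : Corr A) (hW : W.Reg) (hV : V.Reg)
    (T : Corr A) (m : W.X → V.X → T.X) (hT : IsTensor W V T m)
    (π : A → B) (σ : W.X → B) (ω : V.X → B)
    (hσ : IsRep W π σ) (hω : IsRep V π ω)
    (hσc : CPCov W π σ) (hωc : CPCov V π ω)
    (τ : T.X → B) (hτ : IsRep T π τ)
    (hτm : ∀ x y, τ (m x y) = σ x * ω y) :
    CPCov T π τ := by
  intro a N x y hconv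
  classical
  set K : ℕ → T.X →L[ℂ] T.X := fun n => ∑ r, T.rankOne (x n r) (y n r) with hK
  set S : ℕ → B := fun n => ∑ r, τ (x n r) * star (τ (y n r)) with hSdef
  -- uniform difference bound via the key bound
  have hdiff : ∀ p q : ℕ, ‖S p - S q‖ ≤ 2 * ‖K p - K q‖ := by
    intro p q
    have hkb := key_bound hτ
      (Sum.elim (x p) (x q)) (Sum.elim (y p) (fun r => -(y q r)))
    have eS : ∑ r : Fin (N p) ⊕ Fin (N q),
        τ (Sum.elim (x p) (x q) r) * star (τ (Sum.elim (y p) (fun r => -(y q r)) r))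
        = S p - S q := by
      rw [Fintype.sum_sum_type]
      simp only [Sum.elim_inl, Sum.elim_inr, hτ.t_neg, star_neg, mul_neg]
      rw [Finset.sum_neg_distrib, hSdef, sub_eq_add_neg]
    have eK : ∑ r : Fin (N p) ⊕ Fin (N q),
        T.rankOne (Sum.elim (x p) (x q) r) (Sum.elim (y p) (fun r => -(y q r)) r)
        = K p - K q := by
      rw [Fintype.sum_sum_type]
      simp only [Sum.elim_inl, Sum.elim_inr, T.rankOne_neg_right]
      rw [Finset.sum_neg_distrib, hK, sub_eq_add_neg]
    rw [eS, eK] at hkb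
    exact hkb
  have hKc : CauchySeq K := hconv.cauchySeq
  have hScauchy : CauchySeq S := by
    rw [Metric.cauchySeq_iff] at hKc ⊢
    intro ε hε
    obtain ⟨M, hM⟩ := hKc (ε / 4) (by linarith)
    refine ⟨M, fun p hp q hq => ?_⟩
    have h1 := hM p hp q hq
    rw [dist_eq_norm] at h1 ⊢
    linarith [hdiff p q]
  obtain ⟨L, hL⟩ := cauchySeq_tendsto_of_complete hScauchy
  set d := L - π a with hd
  -- evaluation identity
  have hSapp : ∀ (n : ℕ) (z : T.X), S n * τ z = τ (K n z) := by
    intro n z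
    simp only [hSdef, hK]
    rw [Finset.sum_mul, ContinuousLinearMap.sum_apply, hτ.t_sum]
    refine Finset.sum_congr rfl fun r _ => ?_
    rw [mul_assoc, hτ.inner, ← hτ.ract, ← T.rankOne_apply]
  have happly : ∀ z : T.X, Tendsto (fun n => K n z) atTop (𝓝 (T.lactL a z)) := by
    intro z
    rw [tendsto_iff_dist_tendsto_zero]
    have hb : ∀ n, dist (K n z) (T.lactL a z) ≤ ‖K n - T.lactL a‖ * ‖z‖ := by
      intro n
      rw [dist_eq_norm, ← ContinuousLinearMap.sub_apply]
      exact (K n - T.lactL a).le_opNorm z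
    have h0 : Tendsto (fun n => ‖K n - T.lactL a‖ * ‖z‖) atTop (𝓝 0) := by
      have h1 : Tendsto (fun n => K n - T.lactL a) atTop (𝓝 0) := by
        have := hconv.sub (tendsto_const_nhds (x := T.lactL a) (f := atTop))
        rwa [sub_self] at this
      have h2 := (h1.norm).mul_const ‖z‖
      simpa using h2
    exact squeeze_zero (fun n => dist_nonneg) hb h0
  have hdτ : ∀ z : T.X, d * τ z = 0 := by
    intro z
    have h1 : Tendsto (fun n => S n * τ z) atTop (𝓝 (L * τ z)) :=
      hL.mul tendsto_const_nhds
    have h2 : Tendsto (fun n => τ (K n z)) atTop (𝓝 (τ (T.lactL a z))) :=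
      ((hτ.t_continuous).tendsto _).comp (happly z)
    have h3 : L * τ z = τ (T.lactL a z) := by
      refine tendsto_nhds_unique h1 ?_
      have heq : (fun n => S n * τ z) = fun n => τ (K n z) := funext fun n => hSapp n z
      rw [heq]
      exact h2
    rw [hd, sub_mul, h3, hτ.lact, sub_self]
  have hdω : ∀ (xx : W.X) (u : V.X), d * (σ xx * ω u) = 0 := by
    intro xx u
    rw [← hτm, hdτ]
  have hdσπ : ∀ (xx : W.X) (c : A), d * (σ xx * π c) = 0 := by
    intro xx c
    obtain ⟨N', u', v', hconv'⟩ := pi_approx V hV.2 hωc c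
    have hterm : ∀ n, d * (σ xx * ∑ r, ω (u' n r) * star (ω (v' n r))) = 0 := by
      intro n
      rw [Finset.mul_sum, Finset.mul_sum]
      refine Finset.sum_eq_zero fun r _ => ?_
      have h0 := hdω xx (u' n r)
      calc d * (σ xx * (ω (u' n r) * star (ω (v' n r))))
          = (d * (σ xx * ω (u' n r))) * star (ω (v' n r)) := by
            simp only [mul_assoc]
        _ = 0 := by rw [h0, zero_mul]
    have h1 : Tendsto (fun n => d * (σ xx * ∑ r, ω (u' n r) * star (ω (v' n r))))
        atTop (𝓝 (d * (σ xx * π c))) :=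
      tendsto_const_nhds.mul (tendsto_const_nhds.mul hconv')
    exact tendsto_nhds_unique h1 (by rw [funext hterm]; exact tendsto_const_nhds)
  have hdσ : ∀ xx : W.X, d * σ xx = 0 := by
    intro xx
    obtain ⟨e, he⟩ := ract_approx W xx
    have hterm : ∀ n, d * σ (W.ract xx (e n)) = 0 := by
      intro n
      rw [hσ.ract]
      exact hdσπ xx (e n)
    have h1 : Tendsto (fun n => d * σ (W.ract xx (e n))) atTop (𝓝 (d * σ xx)) :=
      tendsto_const_nhds.mul (((hσ.t_continuous).tendsto _).comp he)
    exact tendsto_nhds_unique h1 (by rw [funext hterm]; exact tendsto_const_nhds)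
  have hdπ : ∀ c : A, d * π c = 0 := by
    intro c
    obtain ⟨N', u', v', hconv'⟩ := pi_approx W hW.2 hσc c
    have hterm : ∀ n, d * ∑ r, σ (u' n r) * star (σ (v' n r)) = 0 := by
      intro n
      rw [Finset.mul_sum]
      refine Finset.sum_eq_zero fun r _ => ?_
      rw [← mul_assoc, hdσ, zero_mul]
    have h1 : Tendsto (fun n => d * ∑ r, σ (u' n r) * star (σ (v' n r)))
        atTop (𝓝 (d * π c)) := tendsto_const_nhds.mul hconv'
    exact tendsto_nhds_unique h1 (by rw [funext hterm]; exact tendsto_const_nhds)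
  have hdLstar : d * star L = 0 := by
    have h1 : Tendsto (fun n => d * star (S n)) atTop (𝓝 (d * star L)) :=
      tendsto_const_nhds.mul hL.star
    have hterm : ∀ n, d * star (S n) = 0 := by
      intro n
      simp only [hSdef]
      rw [star_sum, Finset.mul_sum]
      refine Finset.sum_eq_zero fun r _ => ?_
      rw [star_mul, star_star, ← mul_assoc, hdτ, zero_mul]
    exact tendsto_nhds_unique h1 (by rw [funext hterm]; exact tendsto_const_nhds)
  have hdd : d * star d = 0 := by
    nth_rewrite 2 [hd]
    rw [star_sub, mul_sub, hdLstar, ← hσ.hom.map_star, hdπ (star a), sub_zero]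
  have hdz : d = 0 := by
    have h1 : ‖d‖ * ‖d‖ = ‖d * star d‖ := (CStarRing.norm_self_mul_star).symm
    rw [hdd, norm_zero] at h1
    have h2 : ‖d‖ = 0 := by nlinarith [norm_nonneg d]
    exact norm_eq_zero.mp h2
  have hLa : L = π a := by rwa [hd, sub_eq_zero] at hdz
  rw [← hLa]
  exact hL
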